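/- For every 1D cellular automaton A = (S^ℤ, F) of radius 1 (with local rule f : S³ → S) there exists a one-way cellular automaton B = (T^ℤ, G) that simulates it in the following sense: take T = S ∪ (S × S), let g : T² → T satisfy g(s₁, s₂) = (s₁, s₂) whenever s₁, s₂ ∈ S and g((a,b), (b,c)) = f(a, b, c) for all a, b, c ∈ S (g arbitrary otherwise), and let G(c)(i) = g(c(i), c(i+1)). Then for every configuration c ∈ S^ℤ ⊆ T^ℤ one has σ_{−1}(G²(c)) = F(c). -/
import Mathlib


/-- The shift on 1D configurations: `(σ_v c)(i) = c(v + i)`. -/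
def shift1 {S : Type} (v : ℤ) (c : ℤ → S) : ℤ → S := fun i => c (v + i)

/-- For every 1D CA `A = (S^ℤ, F)` of radius 1 with local rule
`f : S³ → S`, the one-way CA `B = (T^ℤ, G)` with `T = S ∪ (S × S)` and local rule `g`
satisfying `g(s₁, s₂) = (s₁, s₂)` for `s₁, s₂ ∈ S` and `g((a,b),(b,c)) = f(a,b,c)`
(arbitrary otherwise) simulates it: for every `c ∈ S^ℤ ⊆ T^ℤ`,
`σ₋₁(G²(c)) = F(c)`. -/
theorem one_way_CA_simulation (S : Type) [Finite S]
    (f : S → S → S → S) (F : (ℤ → S) → ℤ → S)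
    (hF : ∀ (c : ℤ → S) (i : ℤ), F c i = f (c (i - 1)) (c i) (c (i + 1)))
    (g : (S ⊕ S × S) → (S ⊕ S × S) → (S ⊕ S × S))
    (hg₁ : ∀ s₁ s₂ : S, g (Sum.inl s₁) (Sum.inl s₂) = Sum.inr (s₁, s₂))
    (hg₂ : ∀ a b c : S, g (Sum.inr (a, b)) (Sum.inr (b, c)) = Sum.inl (f a b c))
    (G : (ℤ → (S ⊕ S × S)) → ℤ → (S ⊕ S × S))
    (hG : ∀ (c : ℤ → (S ⊕ S × S)) (i : ℤ), G c i = g (c i) (c (i + 1))) :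
    ∀ c : ℤ → S,
      shift1 (-1) (G^[2] fun j => Sum.inl (c j)) = fun i => Sum.inl (F c i) := by
  intro c
  funext i
  simp only [shift1, Function.iterate_succ, Function.iterate_zero, Function.comp_apply, id]
  rw [hG, hG, hG, hg₁, hg₁]
  have h1 : -1 + i + 1 = i := by ring
  rw [h1, hg₂, hF]
  congr 1
  ring
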